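/- Let h ≠ 0 and f(s) = a₁ s + a₀ with a₁² = 1. Then the helicoidal surface X(s,t) = (s cos t, s sin t, ht + f(s)) in Minkowski 3-space has constant Gauss curvature K = 1/h², where K is computed as K = -(det(X_s,X_t,X_ss)·det(X_s,X_t,X_tt) - det(X_s,X_t,X_st)²)/(EG - F²)². -/

import Mathlib

noncomputable section

/-- Lorentzian inner product on Minkowski 3-space. -/
def mink (u v : ℝ × ℝ × ℝ) : ℝ := u.1 * v.1 + u.2.1 * v.2.1 - u.2.2 * v.2.2

/-- Determinant of the 3×3 matrix with columns `u,v,w`. -/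
def det3 (u v w : ℝ × ℝ × ℝ) : ℝ :=
  u.1 * (v.2.1 * w.2.2 - v.2.2 * w.2.1)
    - u.2.1 * (v.1 * w.2.2 - v.2.2 * w.1)
    + u.2.2 * (v.1 * w.2.1 - v.2.1 * w.1)

/-- Partial derivative with respect to the first parameter. -/
def pd1 (X : ℝ → ℝ → ℝ × ℝ × ℝ) : ℝ → ℝ → ℝ × ℝ × ℝ := fun s t => deriv (fun u => X u t) s

/-- Partial derivative with respect to the second parameter. -/
def pd2 (X : ℝ → ℝ → ℝ × ℝ × ℝ) : ℝ → ℝ → ℝ × ℝ × ℝ := fun s t => deriv (fun u => X s u) t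

def Ecoef (X : ℝ → ℝ → ℝ × ℝ × ℝ) (s t : ℝ) : ℝ := mink (pd1 X s t) (pd1 X s t)
def Fcoef (X : ℝ → ℝ → ℝ × ℝ × ℝ) (s t : ℝ) : ℝ := mink (pd1 X s t) (pd2 X s t)
def Gcoef (X : ℝ → ℝ → ℝ × ℝ × ℝ) (s t : ℝ) : ℝ := mink (pd2 X s t) (pd2 X s t)

/-- `W = EG - F²`. -/
def Wform (X : ℝ → ℝ → ℝ × ℝ × ℝ) (s t : ℝ) : ℝ :=
  Ecoef X s t * Gcoef X s t - Fcoef X s t ^ 2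

/-- Numerator `H₁ = G·det(Xs,Xt,Xss) - 2F·det(Xs,Xt,Xst) + E·det(Xs,Xt,Xtt)`. -/
def H1 (X : ℝ → ℝ → ℝ × ℝ × ℝ) (s t : ℝ) : ℝ :=
  Gcoef X s t * det3 (pd1 X s t) (pd2 X s t) (pd1 (pd1 X) s t)
    - 2 * Fcoef X s t * det3 (pd1 X s t) (pd2 X s t) (pd2 (pd1 X) s t)
    + Ecoef X s t * det3 (pd1 X s t) (pd2 X s t) (pd2 (pd2 X) s t)

/-- `K₁ = det(Xs,Xt,Xss)·det(Xs,Xt,Xtt) - det(Xs,Xt,Xst)²`. -/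
def K1 (X : ℝ → ℝ → ℝ × ℝ × ℝ) (s t : ℝ) : ℝ :=
  det3 (pd1 X s t) (pd2 X s t) (pd1 (pd1 X) s t)
      * det3 (pd1 X s t) (pd2 X s t) (pd2 (pd2 X) s t)
    - det3 (pd1 X s t) (pd2 X s t) (pd2 (pd1 X) s t) ^ 2

/-- Mean curvature of a timelike surface (`ε = 1`, `W < 0`). -/
def Hmean (X : ℝ → ℝ → ℝ × ℝ × ℝ) (s t : ℝ) : ℝ :=
  -(1 / 2) * H1 X s t / (-(Wform X s t)) ^ ((3 : ℝ) / 2)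

/-- Gauss curvature `K = -K₁/W²`. -/
def Kcurv (X : ℝ → ℝ → ℝ × ℝ × ℝ) (s t : ℝ) : ℝ :=
  -(K1 X s t) / (Wform X s t) ^ 2

lemma hasDerivAt_prod3 {f g k : ℝ → ℝ} {f' g' k' x : ℝ}
    (hf : HasDerivAt f f' x) (hg : HasDerivAt g g' x) (hk : HasDerivAt k k' x) :
    HasDerivAt (fun u => ((f u, g u, k u) : ℝ × ℝ × ℝ)) (f', g', k') x :=
  hf.prodMk (hg.prodMk hk)

/-- The helicoidal surface `X(s,t) = (s cos t, s sin t, ht + a₁ s + a₀)` with `a₁² = 1`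
has constant Gauss curvature `K = 1/h²`. -/
theorem stmt_2 (h a₀ a₁ : ℝ) (hh : h ≠ 0) (ha : a₁ ^ 2 = 1) :
    let X : ℝ → ℝ → ℝ × ℝ × ℝ :=
      fun s t => (s * Real.cos t, s * Real.sin t, h * t + (a₁ * s + a₀))
    ∀ s t : ℝ, Kcurv X s t = 1 / h ^ 2 := by
  intro X s t
  have hXs : ∀ s t : ℝ, pd1 X s t = (Real.cos t, Real.sin t, a₁) := by
    intro s t
    exact (hasDerivAt_prod3
      ((hasDerivAt_id s).mul_const _)
      ((hasDerivAt_id s).mul_const _)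
      ((hasDerivAt_const s (h * t)).add
        (((hasDerivAt_id s).const_mul a₁).add_const a₀))).deriv.trans
      (by simp)
  have hXt : ∀ s t : ℝ, pd2 X s t = (-(s * Real.sin t), s * Real.cos t, h) := by
    intro s t
    exact (hasDerivAt_prod3
      ((Real.hasDerivAt_cos t).const_mul s)
      ((Real.hasDerivAt_sin t).const_mul s)
      (((hasDerivAt_id t).const_mul h).add_const _)).deriv.trans
      (by simp)
  have hXss : pd1 (pd1 X) s t = ((0 : ℝ), (0 : ℝ), (0 : ℝ)) := by
    have : pd1 X = fun s t => ((Real.cos t, Real.sin t, a₁) : ℝ × ℝ × ℝ) := by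
      funext u v; exact hXs u v
    rw [this]
    exact (hasDerivAt_prod3 (hasDerivAt_const s _) (hasDerivAt_const s _)
      (hasDerivAt_const s _)).deriv
  have hXst : pd2 (pd1 X) s t = (-Real.sin t, Real.cos t, (0 : ℝ)) := by
    have : pd1 X = fun s t => ((Real.cos t, Real.sin t, a₁) : ℝ × ℝ × ℝ) := by
      funext u v; exact hXs u v
    rw [this]
    exact (hasDerivAt_prod3 (Real.hasDerivAt_cos t) (Real.hasDerivAt_sin t)
      (hasDerivAt_const t _)).deriv
  have hXtt : pd2 (pd2 X) s t = (-(s * Real.cos t), -(s * Real.sin t), (0 : ℝ)) := by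
    have : pd2 X = fun s t => ((-(s * Real.sin t), s * Real.cos t, h) : ℝ × ℝ × ℝ) := by
      funext u v; exact hXt u v
    rw [this]
    exact (hasDerivAt_prod3 (((Real.hasDerivAt_sin t).const_mul s).neg)
      ((Real.hasDerivAt_cos t).const_mul s) (hasDerivAt_const t _)).deriv.trans
      (by simp)
  have hc : Real.cos t ^ 2 + Real.sin t ^ 2 = 1 := by
    rw [add_comm]; exact Real.sin_sq_add_cos_sq t
  simp only [Kcurv, K1, Wform, Ecoef, Fcoef, Gcoef, mink, det3,
    hXs, hXt, hXss, hXst, hXtt]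
  set c := Real.cos t
  set σ := Real.sin t
  have hW : (c * c + σ * σ - a₁ * a₁) *
        (-(s * σ) * -(s * σ) + s * c * (s * c) - h * h) -
      (c * -(s * σ) + σ * (s * c) - a₁ * h) ^ 2 = -h ^ 2 := by
    linear_combination (s * σ * (s * σ) + s * c * (s * c) - h * h) * hc
      - (s * σ * (s * σ) + s * c * (s * c) - h * h + h ^ 2) * ha
  rw [hW]
  have hW2 : ((-h ^ 2 : ℝ)) ^ 2 = h ^ 4 := by ring
  rw [hW2]
  rw [div_eq_div_iff (by positivity) (by positivity)]
  linear_combination (h ^ 2 * (c ^ 2 + σ ^ 2) + h ^ 2) * h ^ 2 * hc
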